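/- Let V be a finite-dimensional ℚ-vector space. The map Λ ↦ Λ ⊗ Ẑ is a bijection between lattices in V (ℤ-spans of ℚ-bases of V) and lattices in V ⊗ 𝔸_f (products over primes p of ℤ_p-lattices in V ⊗ ℚ_p that equal a fixed integral model for almost all p), with inverse given by intersection with V. -/

import Mathlib

open scoped TensorProduct

variable (V : Type*) [AddCommGroup V] [Module ℚ V] [FiniteDimensional ℚ V]

/-- A lattice in a finite-dimensional `ℚ`-vector space `V`: the `ℤ`-span of a
`ℚ`-basis of `V`. -/
def IsZLatticeIn (Λ : Submodule ℤ V) : Prop :=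
  ∃ b : Module.Basis (Fin (Module.finrank ℚ V)) ℚ V,
    Λ = Submodule.span ℤ (Set.range ⇑b)

section LocalData

variable (p : ℕ) [Fact p.Prime]

/-- `ℤ_p`-module structure on `V ⊗ ℚ_p`, by restriction of scalars. -/
noncomputable instance padicTensorModule : Module ℤ_[p] (ℚ_[p] ⊗[ℚ] V) :=
  Module.compHom _ (algebraMap ℤ_[p] ℚ_[p])

/-- The natural localization map `V → V ⊗ ℚ_p`. -/
noncomputable def toLocal : V → ℚ_[p] ⊗[ℚ] V := fun x => (1 : ℚ_[p]) ⊗ₜ[ℚ] x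

/-- A `ℤ_p`-lattice in `V ⊗ ℚ_p`: the `ℤ_p`-span of a `ℚ_p`-basis. -/
def IsZpLattice (M : Submodule ℤ_[p] (ℚ_[p] ⊗[ℚ] V)) : Prop :=
  ∃ b : Module.Basis (Fin (Module.finrank ℚ V)) ℚ_[p] (ℚ_[p] ⊗[ℚ] V),
    M = Submodule.span ℤ_[p] (Set.range ⇑b)

/-- The localization `Λ ⊗ ℤ_p` of a `ℤ`-submodule `Λ ⊆ V` at the prime `p`. -/
noncomputable def localizeLat (Λ : Submodule ℤ V) :
    Submodule ℤ_[p] (ℚ_[p] ⊗[ℚ] V) :=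
  Submodule.span ℤ_[p] (toLocal V p '' (Λ : Set V))

end LocalData

/-- Families of `ℤ_p`-submodules of `V ⊗ ℚ_p`, one for each prime `p`. -/
noncomputable def LocalLatticeFamily : Type _ :=
  ∀ p : Nat.Primes, letI : Fact (p : ℕ).Prime := ⟨p.2⟩
    Submodule ℤ_[(p : ℕ)] (ℚ_[(p : ℕ)] ⊗[ℚ] V)

/-- The family of localizations `(Λ ⊗ ℤ_p)_p`, i.e. the map `Λ ↦ Λ ⊗ Ẑ`. -/
noncomputable def adelicOf (Λ : Submodule ℤ V) : LocalLatticeFamily V :=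
  fun p => letI : Fact (p : ℕ).Prime := ⟨p.2⟩; localizeLat V (p : ℕ) Λ

/-- A lattice in `V ⊗ 𝔸_f`: a family of `ℤ_p`-lattices in `V ⊗ ℚ_p` that
agrees with the localizations of a fixed integral model `Λ₀` for all but
finitely many primes. -/
def IsAdelicLattice (Λ₀ : Submodule ℤ V) (M : LocalLatticeFamily V) : Prop :=
  (∀ p : Nat.Primes, letI : Fact (p : ℕ).Prime := ⟨p.2⟩
      IsZpLattice V (p : ℕ) (M p)) ∧
    {p : Nat.Primes | M p ≠ adelicOf V Λ₀ p}.Finite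

/-- The intersection with `V` of a family of local lattices. -/
noncomputable def globalPart (M : LocalLatticeFamily V) : Set V :=
  ⋂ p : Nat.Primes, (letI : Fact (p : ℕ).Prime := ⟨p.2⟩
    toLocal V (p : ℕ) ⁻¹' (M p : Set (ℚ_[(p : ℕ)] ⊗[ℚ] V)))


/-! ### Auxiliary lemmas -/

set_option linter.unusedSectionVars false
set_option maxHeartbeats 1000000
noncomputable section LGAux

open Submodule TensorProduct Module

namespace LG

variable {V : Type*} [AddCommGroup V] [Module ℚ V] [FiniteDimensional ℚ V]

variable (p : ℕ) [Fact p.Prime]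

instance : IsScalarTower ℤ_[p] ℚ_[p] (ℚ_[p] ⊗[ℚ] V) :=
  ⟨fun c q x => by rw [Algebra.smul_def]; rw [mul_smul]; rfl⟩

theorem algebraMap_padic_apply (c : ℤ_[p]) : algebraMap ℤ_[p] ℚ_[p] c = (c : ℚ_[p]) := rfl

instance : NoZeroSMulDivisors ℤ_[p] ℚ_[p] :=
  ⟨fun {c x} h => by
    rcases mul_eq_zero.1 (show (c:ℚ_[p]) * x = 0 from h) with h | h
    · left; exact Subtype.ext h
    · right; exact h⟩

theorem zp_smul_def (c : ℤ_[p]) (x : ℚ_[p] ⊗[ℚ] V) : c • x = (c : ℚ_[p]) • x := rfl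

/-- scaling by a `p`-adic integer preserves `ℤ_p`-submodules -/
theorem smul_mem_of_norm_le {N : Submodule ℤ_[p] (ℚ_[p] ⊗[ℚ] V)} {q : ℚ_[p]}
    (hq : ‖q‖ ≤ 1) {x : ℚ_[p] ⊗[ℚ] V} (hx : x ∈ N) : q • x ∈ N :=
  N.smul_mem (⟨q, hq⟩ : ℤ_[p]) hx

/-- norm criterion for membership in the `ℤ_p`-span of a basis -/
theorem mem_span_basis_iff {ι : Type*} (d : Basis ι ℚ_[p] (ℚ_[p] ⊗[ℚ] V))
    (x : ℚ_[p] ⊗[ℚ] V) :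
    x ∈ span ℤ_[p] (Set.range ⇑d) ↔ ∀ i, ‖d.repr x i‖ ≤ 1 := by
  rw [@Basis.mem_span_iff_repr_mem _ ℤ_[p] _ _ _ _ _ _ _ _ _ _
    ⟨fun c q x => by rw [Algebra.smul_def]; rw [mul_smul]; rfl⟩ _ d x]
  constructor
  · intro h i
    obtain ⟨z, hz⟩ := h i
    rw [← hz, algebraMap_padic_apply, ← PadicInt.norm_def]
    exact z.2
  · intro h i
    exact ⟨⟨_, h i⟩, rfl⟩

theorem toLocal_add (x y : V) : toLocal V p (x + y) = toLocal V p x + toLocal V p y :=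
  TensorProduct.tmul_add _ _ _

theorem toLocal_qsmul (q : ℚ) (x : V) :
    toLocal V p (q • x) = ((q : ℚ_[p])) • toLocal V p x := by
  show (1 : ℚ_[p]) ⊗ₜ[ℚ] (q • x) = _
  rw [TensorProduct.tmul_smul]
  rw [show (q • ((1:ℚ_[p]) ⊗ₜ[ℚ] x)) = (algebraMap ℚ ℚ_[p] q) • ((1:ℚ_[p]) ⊗ₜ[ℚ] x) from
    (algebraMap_smul ℚ_[p] q _).symm]
  norm_num [toLocal]

theorem toLocal_zsmul (n : ℤ) (x : V) :
    toLocal V p (n • x) = n • toLocal V p x := by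
  rw [show (n • x) = ((n : ℚ)) • x from (Int.cast_smul_eq_zsmul ℚ n x).symm, toLocal_qsmul]
  rw [show ((((n:ℚ)) : ℚ_[p])) = ((n : ℚ_[p])) by push_cast; ring]
  exact Int.cast_smul_eq_zsmul ℚ_[p] n _

/-- reduction to generators for images of spans -/
theorem toLocal_span_mem {s : Set V} {N : Submodule ℤ_[p] (ℚ_[p] ⊗[ℚ] V)}
    (h : ∀ v ∈ s, toLocal V p v ∈ N) :
    ∀ x ∈ span ℤ s, toLocal V p x ∈ N := by
  intro x hx
  induction hx using Submodule.span_induction with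
  | mem v hv => exact h v hv
  | zero => show (1:ℚ_[p]) ⊗ₜ[ℚ] (0:V) ∈ N; rw [TensorProduct.tmul_zero]; exact N.zero_mem
  | add a b _ _ ha hb => rw [toLocal_add]; exact N.add_mem ha hb
  | smul n a _ ha =>
      rw [toLocal_zsmul]
      exact N.toAddSubgroup.zsmul_mem ha n

theorem localizeLat_le_iff {Λ : Submodule ℤ V} {N : Submodule ℤ_[p] (ℚ_[p] ⊗[ℚ] V)} :
    localizeLat V p Λ ≤ N ↔ ∀ v ∈ Λ, toLocal V p v ∈ N := by
  rw [localizeLat, Submodule.span_le]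
  constructor
  · intro h v hv; exact h ⟨v, hv, rfl⟩
  · rintro h _ ⟨v, hv, rfl⟩; exact h v hv

theorem toLocal_mem_localizeLat {Λ : Submodule ℤ V} {v : V} (hv : v ∈ Λ) :
    toLocal V p v ∈ localizeLat V p Λ :=
  Submodule.subset_span ⟨v, hv, rfl⟩

/-- the localization of a lattice is the span of the base-changed basis -/
theorem localizeLat_span_basis {ι : Type*} (b : Basis ι ℚ V) :
    localizeLat V p (span ℤ (Set.range ⇑b)) =
      span ℤ_[p] (Set.range ⇑(b.baseChange ℚ_[p])) := by
  apply le_antisymm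
  · rw [localizeLat_le_iff]
    intro v hv
    refine toLocal_span_mem p (fun w hw => ?_) v hv
    obtain ⟨i, rfl⟩ := hw
    refine Submodule.subset_span ⟨i, ?_⟩
    rw [Basis.baseChange_apply]; rfl
  · rw [Submodule.span_le]
    rintro _ ⟨i, rfl⟩
    rw [Basis.baseChange_apply]
    exact toLocal_mem_localizeLat p (Submodule.subset_span ⟨i, rfl⟩)

theorem repr_toLocal {ι : Type*} (b : Basis ι ℚ V) (x : V) (i : ι) :
    (b.baseChange ℚ_[p]).repr (toLocal V p x) i = ((b.repr x i : ℚ) : ℚ_[p]) := by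
  rw [toLocal, Basis.baseChange_repr_tmul]
  rw [show ((b.repr x i) • (1:ℚ_[p])) = (algebraMap ℚ ℚ_[p] (b.repr x i)) * 1 from
    Algebra.smul_def _ _]
  norm_num

/-- membership of a global vector in a localized lattice, in coordinates -/
theorem toLocal_mem_localizeLat_iff {ι : Type*} (b : Basis ι ℚ V) (x : V) :
    toLocal V p x ∈ localizeLat V p (span ℤ (Set.range ⇑b)) ↔
      ∀ i, ‖((b.repr x i : ℚ) : ℚ_[p])‖ ≤ 1 := by
  rw [localizeLat_span_basis, mem_span_basis_iff]
  constructor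
  · intro h i; rw [← repr_toLocal]; exact h i
  · intro h i; rw [repr_toLocal]; exact h i


theorem norm_int_eq_one_of_not_dvd {z : ℤ} (hz : ¬ ((p:ℤ) ∣ z)) : ‖(z : ℚ_[p])‖ = 1 := by
  rcases lt_or_eq_of_le (Padic.norm_int_le_one (p := p) z) with h | h
  · exact absurd ((Padic.norm_intCast_lt_one_iff (k := z)).1 h) hz
  · exact h

theorem exists_int_of_norm_le {q : ℚ}
    (h : ∀ (p : ℕ) (_ : Fact p.Prime), ‖(q : ℚ_[p])‖ ≤ 1) :
    ∃ z : ℤ, (z : ℚ) = q := by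
  by_cases hd : q.den = 1
  · refine ⟨q.num, ?_⟩
    conv_rhs => rw [← Rat.num_div_den q]
    rw [hd]; norm_num
  · obtain ⟨p, pp, hpd⟩ := Nat.exists_prime_and_dvd hd
    haveI : Fact p.Prime := ⟨pp⟩
    exfalso
    have h1 : ‖((q.den : ℤ) : ℚ_[p])‖ < 1 := by
      rw [Padic.norm_intCast_lt_one_iff]
      exact Int.natCast_dvd_natCast.2 hpd
    have h2 : ‖((q.num : ℤ) : ℚ_[p])‖ = 1 := by
      refine norm_int_eq_one_of_not_dvd p (fun hdvd => ?_)
      have : p ∣ q.num.natAbs := Int.natCast_dvd.mp hdvd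
      have hg : p ∣ Nat.gcd q.num.natAbs q.den := Nat.dvd_gcd this hpd
      exact pp.ne_one (Nat.dvd_one.mp (q.reduced ▸ hg))
    have h3 : ((q.num : ℚ_[p])) = (q : ℚ_[p]) * ((q.den : ℚ_[p])) := by
      rw [show ((q.num : ℚ_[p])) = (((q.num : ℚ) : ℚ_[p])) by push_cast; ring]
      rw [← Rat.mul_den_eq_num]
      push_cast; ring
    have h4 : (1:ℝ) < 1 := by
      calc (1:ℝ) = ‖((q.num : ℤ) : ℚ_[p])‖ := h2.symm
        _ = ‖(q : ℚ_[p])‖ * ‖((q.den : ℤ) : ℚ_[p])‖ := by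
              rw [show ((q.num:ℤ) : ℚ_[p]) = (q : ℚ_[p]) * ((q.den : ℚ_[p])) from h3]
              rw [Padic.padicNormE.mul]
              norm_num
        _ ≤ 1 * ‖((q.den : ℤ) : ℚ_[p])‖ := by
              apply mul_le_mul_of_nonneg_right (h p ⟨pp⟩) (norm_nonneg _)
        _ < 1 := by rw [one_mul]; exact_mod_cast h1
    exact lt_irrefl _ h4

theorem exists_int_mul_of_den_dvd {q : ℚ} {N : ℕ} (h : q.den ∣ N) :
    ∃ z : ℤ, (z : ℚ) = (N : ℚ) * q := by
  obtain ⟨k, hk⟩ := h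
  refine ⟨k * q.num, ?_⟩
  have h2 : (q.den : ℚ) * q = q.num := by rw [mul_comm]; exact_mod_cast Rat.mul_den_eq_num q
  rw [hk]
  push_cast
  rw [mul_comm (q.den : ℚ) (k:ℚ), mul_assoc, h2]

/-- commensurability: any `ℤ_p`-lattice is sandwiched between scalings of a fixed one -/
theorem exists_lattice_bounds {n : ℕ} (c : Basis (Fin n) ℚ V)
    (M : Submodule ℤ_[p] (ℚ_[p] ⊗[ℚ] V))
    (d : Basis (Fin n) ℚ_[p] (ℚ_[p] ⊗[ℚ] V)) (hM : M = span ℤ_[p] (Set.range ⇑d)) :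
    ∃ a : ℕ, (∀ x ∈ M, ∀ i, ‖(c.baseChange ℚ_[p]).repr x i‖ ≤ (p:ℝ)^(a:ℤ)) ∧
      (∀ x : ℚ_[p] ⊗[ℚ] V,
        (∀ i, ‖(c.baseChange ℚ_[p]).repr x i‖ ≤ (p:ℝ)^(-(a:ℤ))) → x ∈ M) := by
  set cp := c.baseChange ℚ_[p] with hcp
  set B : ℝ := (∑ j, ∑ i, ‖cp.repr (d j) i‖) + ((∑ i, ∑ j, ‖d.repr (cp i) j‖) + 1) with hB
  have hterm_nonneg : ∀ (f : Fin n → ℝ), (∀ i, 0 ≤ f i) → ∀ i, f i ≤ ∑ k, f k := by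
    intro f hf i
    exact Finset.single_le_sum (fun k _ => hf k) (Finset.mem_univ i)
  have hsum1_nonneg : (0:ℝ) ≤ ∑ j, ∑ i, ‖cp.repr (d j) i‖ :=
    Finset.sum_nonneg fun j _ => Finset.sum_nonneg fun i _ => norm_nonneg _
  have hsum2_nonneg : (0:ℝ) ≤ ∑ i, ∑ j, ‖d.repr (cp i) j‖ :=
    Finset.sum_nonneg fun i _ => Finset.sum_nonneg fun j _ => norm_nonneg _
  have hB1 : ∀ i, (∑ j, ‖cp.repr (d j) i‖) ≤ B := by
    intro i
    have : (∑ j, ‖cp.repr (d j) i‖) ≤ ∑ j, ∑ i', ‖cp.repr (d j) i'‖ :=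
      Finset.sum_le_sum fun j _ =>
        Finset.single_le_sum (f := fun i' => ‖cp.repr (d j) i'‖)
          (fun k _ => norm_nonneg _) (Finset.mem_univ i)
    calc (∑ j, ‖cp.repr (d j) i‖) ≤ ∑ j, ∑ i', ‖cp.repr (d j) i'‖ := this
      _ ≤ B := by rw [hB]; nlinarith [hsum2_nonneg]
  have hB2 : ∀ i j, ‖d.repr (cp i) j‖ ≤ B := by
    intro i j
    have h1 : ‖d.repr (cp i) j‖ ≤ ∑ j', ‖d.repr (cp i) j'‖ :=
      Finset.single_le_sum (f := fun j' => ‖d.repr (cp i) j'‖)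
        (fun k _ => norm_nonneg _) (Finset.mem_univ j)
    have h2 : (∑ j', ‖d.repr (cp i) j'‖) ≤ ∑ i', ∑ j', ‖d.repr (cp i') j'‖ :=
      Finset.single_le_sum (f := fun i' => ∑ j', ‖d.repr (cp i') j'‖)
        (fun k _ => Finset.sum_nonneg fun j' _ => norm_nonneg _) (Finset.mem_univ i)
    calc ‖d.repr (cp i) j‖ ≤ ∑ j', ‖d.repr (cp i) j'‖ := h1
      _ ≤ ∑ i', ∑ j', ‖d.repr (cp i') j'‖ := h2
      _ ≤ B := by rw [hB]; nlinarith [hsum1_nonneg]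
  have hp1 : (1:ℝ) < (p:ℝ) := by exact_mod_cast (Fact.out : p.Prime).one_lt
  obtain ⟨a, ha⟩ : ∃ a : ℕ, B < (p:ℝ)^(a:ℕ) := pow_unbounded_of_one_lt B hp1
  have haB : B ≤ (p:ℝ)^(a:ℤ) := by rw [zpow_natCast]; exact le_of_lt ha
  refine ⟨a, ?_, ?_⟩
  · intro x hx i
    rw [hM, mem_span_basis_iff] at hx
    have hrepr : cp.repr x i = ∑ j, d.repr x j * cp.repr (d j) i := by
      conv_lhs => rw [← Basis.sum_repr d x]
      rw [map_sum, Finsupp.finset_sum_apply]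
      refine Finset.sum_congr rfl fun j _ => ?_
      rw [map_smul, Finsupp.smul_apply, smul_eq_mul]
    calc ‖cp.repr x i‖ = ‖∑ j, d.repr x j * cp.repr (d j) i‖ := by rw [hrepr]
      _ ≤ ∑ j, ‖d.repr x j * cp.repr (d j) i‖ := norm_sum_le _ _
      _ ≤ ∑ j, ‖cp.repr (d j) i‖ := by
          refine Finset.sum_le_sum fun j _ => ?_
          rw [Padic.padicNormE.mul]
          calc ‖d.repr x j‖ * ‖cp.repr (d j) i‖
              ≤ 1 * ‖cp.repr (d j) i‖ :=
                mul_le_mul_of_nonneg_right (hx j) (norm_nonneg _)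
            _ = ‖cp.repr (d j) i‖ := one_mul _
      _ ≤ B := hB1 i
      _ ≤ (p:ℝ)^(a:ℤ) := haB
  · intro x hx
    rw [hM]
    have hxsum : x = ∑ i, cp.repr x i • cp i := (Basis.sum_repr cp x).symm
    rw [hxsum]
    refine Submodule.sum_mem _ fun i _ => ?_
    have hcpi : cp i = ∑ j, d.repr (cp i) j • d j := (Basis.sum_repr d (cp i)).symm
    rw [hcpi, Finset.smul_sum]
    refine Submodule.sum_mem _ fun j _ => ?_
    rw [smul_smul]
    refine smul_mem_of_norm_le p ?_ (Submodule.subset_span ⟨j, rfl⟩)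
    rw [Padic.padicNormE.mul]
    calc ‖cp.repr x i‖ * ‖d.repr (cp i) j‖
        ≤ (p:ℝ)^(-(a:ℤ)) * B :=
          mul_le_mul (hx i) (hB2 i j) (norm_nonneg _) (by positivity)
      _ ≤ (p:ℝ)^(-(a:ℤ)) * (p:ℝ)^(a:ℤ) :=
          mul_le_mul_of_nonneg_left haB (by positivity)
      _ = 1 := by rw [← zpow_add₀ (by positivity : (p:ℝ) ≠ 0)]; norm_num

theorem span_eq_globalPart {ι : Type*} (b : Basis ι ℚ V) :
    ((span ℤ (Set.range ⇑b) : Submodule ℤ V) : Set V) =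
      globalPart V (adelicOf V (span ℤ (Set.range ⇑b))) := by
  ext x
  rw [globalPart, Set.mem_iInter]
  constructor
  · intro hx pp
    haveI : Fact (pp:ℕ).Prime := ⟨pp.2⟩
    exact toLocal_mem_localizeLat (pp:ℕ) hx
  · intro hx
    show x ∈ span ℤ (Set.range ⇑b)
    rw [Basis.mem_span_iff_repr_mem]
    intro i
    have hall : ∀ (q : ℕ) (_ : Fact q.Prime), ‖((b.repr x i : ℚ) : ℚ_[q])‖ ≤ 1 := by
      intro q hq
      have h1 := hx ⟨q, hq.out⟩
      exact (toLocal_mem_localizeLat_iff q b x).1 h1 i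
    obtain ⟨z, hz⟩ := exists_int_of_norm_le hall
    exact ⟨z, by rw [← hz]; norm_num⟩

theorem norm_natCast_le_zpow_of_dvd {N a : ℕ} (h : p^a ∣ N) :
    ‖((N : ℤ) : ℚ_[p])‖ ≤ (p:ℝ)^(-(a:ℤ)) := by
  exact (Padic.norm_int_le_pow_iff_dvd (N:ℤ) a).2 (by exact_mod_cast h)

theorem localizeLat_le_of_smul_mem {Λ Λ' : Submodule ℤ V} {s : Set V}
    (hΛ : Λ = span ℤ s) {N : ℕ} (hN : ¬ ((p:ℤ) ∣ (N:ℤ)))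
    (h : ∀ v ∈ s, (N:ℤ) • v ∈ Λ') :
    localizeLat V p Λ ≤ localizeLat V p Λ' := by
  rw [localizeLat_le_iff]
  intro v hv
  rw [hΛ] at hv
  refine toLocal_span_mem p (fun w hw => ?_) v hv
  have h1 : toLocal V p ((N:ℤ) • w) ∈ localizeLat V p Λ' := toLocal_mem_localizeLat p (h w hw)
  rw [toLocal_zsmul] at h1
  have hNnorm : ‖(((N:ℕ):ℤ) : ℚ_[p])‖ = 1 := norm_int_eq_one_of_not_dvd p hN
  have hNne : ((((N:ℕ):ℤ)) : ℚ_[p]) ≠ 0 := by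
    intro h0; rw [h0] at hNnorm; simp at hNnorm
  have h2 : toLocal V p w = ((((N:ℕ):ℤ):ℚ_[p]))⁻¹ • ((N:ℤ) • toLocal V p w) := by
    rw [show ((N:ℤ) • toLocal V p w) = ((((N:ℕ):ℤ):ℚ_[p])) • toLocal V p w from
      (Int.cast_smul_eq_zsmul ℚ_[p] _ _).symm, smul_smul, inv_mul_cancel₀ hNne, one_smul]
  rw [h2]
  exact smul_mem_of_norm_le p (by rw [norm_inv, hNnorm]; norm_num) h1

theorem smul_mem_span_of_den_dvd {ι : Type*} [Fintype ι] (c : Basis ι ℚ V) (v : V) {N : ℕ}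
    (h : ∀ j, (c.repr v j).den ∣ N) : (N:ℤ) • v ∈ span ℤ (Set.range ⇑c) := by
  choose z hz using fun j => exists_int_mul_of_den_dvd (h j)
  have key : (N:ℤ) • v = ∑ j, z j • c j := by
    conv_lhs => rw [← Basis.sum_repr c v]
    rw [Finset.smul_sum]
    refine Finset.sum_congr rfl fun j _ => ?_
    rw [show ((N:ℤ) • (c.repr v j • c j)) = ((N:ℚ)) • (c.repr v j • c j) from
      (Int.cast_smul_eq_zsmul ℚ _ _).symm, smul_smul,
      show (z j • c j) = ((z j : ℚ)) • c j from (Int.cast_smul_eq_zsmul ℚ _ _).symm, hz j]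
  rw [key]
  exact Submodule.sum_mem _ fun j _ =>
    Submodule.smul_mem _ _ (Submodule.subset_span ⟨j, rfl⟩)

theorem exists_scaling_nat {ι : Type*} [Fintype ι] (b c : Basis ι ℚ V) :
    ∃ N : ℕ, 0 < N ∧ (∀ i, (N:ℤ) • b i ∈ span ℤ (Set.range ⇑c)) ∧
      (∀ i, (N:ℤ) • c i ∈ span ℤ (Set.range ⇑b)) := by
  refine ⟨(∏ i, ∏ j, (c.repr (b i) j).den) * (∏ i, ∏ j, (b.repr (c i) j).den),
    ?_, fun i => ?_, fun i => ?_⟩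
  · positivity
  · refine smul_mem_span_of_den_dvd c (b i) (fun j => ?_)
    refine dvd_mul_of_dvd_left (dvd_trans (Finset.dvd_prod_of_mem _ (Finset.mem_univ j))
      (Finset.dvd_prod_of_mem (fun i' => ∏ j', (c.repr (b i') j').den) (Finset.mem_univ i))) _
  · refine smul_mem_span_of_den_dvd b (c i) (fun j => ?_)
    exact dvd_mul_of_dvd_right (dvd_trans (Finset.dvd_prod_of_mem _ (Finset.mem_univ j))
      (Finset.dvd_prod_of_mem (fun i' => ∏ j', (b.repr (c i') j').den) (Finset.mem_univ i))) _

theorem finite_primes_dvd {N : ℕ} (hN : 0 < N) : {pp : Nat.Primes | (pp:ℕ) ∣ N}.Finite := by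
  have hsub : {pp : Nat.Primes | (pp:ℕ) ∣ N} ⊆ (fun pp : Nat.Primes => (pp:ℕ)) ⁻¹' (Set.Iic N) := by
    intro pp hpp
    exact Nat.le_of_dvd hN hpp
  refine Set.Finite.subset (Set.Finite.preimage ?_ (Set.finite_Iic N)) hsub
  intro a _ b _ h
  exact Subtype.coe_injective h

theorem adelicOf_apply (Λ : Submodule ℤ V) (pp : Nat.Primes) [h : Fact (pp:ℕ).Prime] :
    adelicOf V Λ pp = localizeLat V (pp:ℕ) Λ := rfl

theorem bounds_zero (c : Basis (Fin (Module.finrank ℚ V)) ℚ V) :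
    (∀ x ∈ localizeLat V p (span ℤ (Set.range ⇑c)), ∀ i,
      ‖(c.baseChange ℚ_[p]).repr x i‖ ≤ (p:ℝ)^(((0:ℕ)):ℤ)) ∧
    (∀ x : ℚ_[p] ⊗[ℚ] V, (∀ i, ‖(c.baseChange ℚ_[p]).repr x i‖ ≤ (p:ℝ)^(-((0:ℕ):ℤ))) →
      x ∈ localizeLat V p (span ℤ (Set.range ⇑c))) := by
  constructor
  · intro x hx i
    rw [localizeLat_span_basis, mem_span_basis_iff] at hx
    simpa using hx i
  · intro x hx
    rw [localizeLat_span_basis, mem_span_basis_iff]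
    intro i
    simpa using hx i

theorem hex_lemma (Λ₀ : Submodule ℤ V) (c : Basis (Fin (Module.finrank ℚ V)) ℚ V)
    (hΛ₀ : Λ₀ = span ℤ (Set.range ⇑c)) (M : LocalLatticeFamily V)
    (hM1 : ∀ pp : Nat.Primes, letI : Fact (pp : ℕ).Prime := ⟨pp.2⟩;
      IsZpLattice V (pp : ℕ) (M pp)) :
    ∀ pp : Nat.Primes, ∃ a : ℕ,
      (letI : Fact (pp:ℕ).Prime := ⟨pp.2⟩;
        (∀ x ∈ M pp, ∀ i, ‖(c.baseChange ℚ_[(pp:ℕ)]).repr x i‖ ≤ ((pp:ℕ):ℝ)^(a:ℤ)) ∧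
        (∀ x, (∀ i, ‖(c.baseChange ℚ_[(pp:ℕ)]).repr x i‖ ≤ ((pp:ℕ):ℝ)^(-(a:ℤ))) →
          x ∈ M pp)) ∧
      (M pp = adelicOf V Λ₀ pp → a = 0) := by
  intro pp
  haveI : Fact (pp:ℕ).Prime := ⟨pp.2⟩
  by_cases heq : M pp = adelicOf V Λ₀ pp
  · have hb := bounds_zero (pp:ℕ) c
    refine ⟨0, ⟨?_, ?_⟩, fun _ => rfl⟩
    · intro x hx i
      refine hb.1 x ?_ i
      rw [heq, adelicOf_apply, hΛ₀] at hx
      exact hx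
    · intro x hx
      rw [heq, adelicOf_apply, hΛ₀]
      exact hb.2 x hx
  · obtain ⟨d, hdM⟩ := hM1 pp
    obtain ⟨a, h1, h2⟩ := exists_lattice_bounds (pp:ℕ) c (M pp) d hdM
    exact ⟨a, ⟨h1, h2⟩, fun h => absurd h heq⟩

theorem small_mem_localizeLat {n : ℕ} (c : Basis (Fin n) ℚ V) {Λ' : Submodule ℤ V}
    {m s : ℕ} (hnorm : ‖(((m:ℕ):ℤ) : ℚ_[p])‖ = (p:ℝ)^(-(s:ℤ))) (hm0 : m ≠ 0)
    (hsub : ∀ i, ((m:ℕ):ℤ) • c i ∈ Λ')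
    (ξ : ℚ_[p] ⊗[ℚ] V) (hξ : ∀ i, ‖(c.baseChange ℚ_[p]).repr ξ i‖ ≤ (p:ℝ)^(-(s:ℤ))) :
    ξ ∈ localizeLat V p Λ' := by
  set cp := c.baseChange ℚ_[p] with hcp
  have hmne : ((((m:ℕ):ℤ)) : ℚ_[p]) ≠ 0 := by
    simp only [Int.cast_natCast, ne_eq, Nat.cast_eq_zero]; exact hm0
  have hξsum : ξ = ∑ i, cp.repr ξ i • cp i := (Basis.sum_repr cp ξ).symm
  rw [hξsum]
  refine Submodule.sum_mem _ fun i _ => ?_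
  have h1 : toLocal V p (((m:ℕ):ℤ) • c i) ∈ localizeLat V p Λ' :=
    toLocal_mem_localizeLat p (hsub i)
  have h2 : toLocal V p (((m:ℕ):ℤ) • c i) = ((((m:ℕ):ℤ)) : ℚ_[p]) • cp i := by
    rw [toLocal_zsmul]
    rw [show (cp i) = toLocal V p (c i) by rw [hcp, Basis.baseChange_apply]; rfl]
    exact (Int.cast_smul_eq_zsmul ℚ_[p] _ _).symm
  have h3 : cp.repr ξ i • cp i =
      (cp.repr ξ i / ((((m:ℕ):ℤ)) : ℚ_[p])) • toLocal V p (((m:ℕ):ℤ) • c i) := by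
    rw [h2, smul_smul, div_mul_cancel₀ _ hmne]
  rw [h3]
  refine smul_mem_of_norm_le p ?_ h1
  have hppos : (0:ℝ) < (p:ℝ) := by exact_mod_cast (Fact.out : p.Prime).pos
  rw [norm_div, hnorm, div_le_one (by positivity)]
  exact hξ i

theorem exists_global (Λ₀ : Submodule ℤ V) (c : Basis (Fin (Module.finrank ℚ V)) ℚ V)
    (hΛ₀ : Λ₀ = span ℤ (Set.range ⇑c))
    (M : LocalLatticeFamily V) (hM : IsAdelicLattice V Λ₀ M) :
    ∃ Λ : Submodule ℤ V, IsZLatticeIn V Λ ∧ adelicOf V Λ = M := by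
  classical
  obtain ⟨hM1, hM2⟩ := hM
  -- Step 1: sandwich exponents
  have hex := hex_lemma Λ₀ c hΛ₀ M hM1
  choose a hA ha0 using hex
  -- Step 2: the global denominator
  set S : Finset Nat.Primes := hM2.toFinset with hS
  set m : ℕ := ∏ pp ∈ S, (pp:ℕ) ^ a pp with hmdef
  have hm0 : m ≠ 0 := by
    rw [hmdef]
    exact Finset.prod_ne_zero_iff.2 fun pp _ => pow_ne_zero _ pp.2.pos.ne'
  have hnotmem : ∀ pp : Nat.Primes, pp ∉ S → a pp = 0 := by
    intro pp hpp
    refine ha0 pp ?_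
    by_contra hne
    exact hpp (hM2.mem_toFinset.2 hne)
  have hdvd : ∀ pp : Nat.Primes, (pp:ℕ)^(a pp) ∣ m := by
    intro pp
    by_cases h : pp ∈ S
    · exact Finset.dvd_prod_of_mem _ h
    · rw [hnotmem pp h]; exact one_dvd _
  have hm_eq : ∀ pp : Nat.Primes, ∃ m' : ℕ,
      m = m' * (pp:ℕ)^(a pp) ∧ ¬ ((pp:ℕ) ∣ m') := by
    intro pp
    refine ⟨∏ qq ∈ S.erase pp, (qq:ℕ)^(a qq), ?_, ?_⟩
    · by_cases h : pp ∈ S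
      · rw [hmdef, ← Finset.prod_erase_mul S _ h]
      · rw [hnotmem pp h, pow_zero, mul_one, hmdef, Finset.erase_eq_of_notMem h]
    · intro hdvd'
      obtain ⟨qq, hqq, hdq⟩ := (Nat.Prime.prime pp.2).dvd_finset_prod_iff _ |>.1 hdvd'
      have : (pp:ℕ) = (qq:ℕ) :=
        (Nat.prime_dvd_prime_iff_eq pp.2 qq.2).1 (pp.2.dvd_of_dvd_pow hdq)
      exact (Finset.ne_of_mem_erase hqq) (Subtype.coe_injective this.symm) |>.elim
  -- Step 3: the candidate global lattice
  set Λ' : Submodule ℤ V :=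
    { carrier := {x | ∀ pp : Nat.Primes, letI : Fact (pp:ℕ).Prime := ⟨pp.2⟩;
        toLocal V (pp:ℕ) x ∈ M pp}
      add_mem' := fun {x y} hx hy pp => by
        haveI : Fact (pp:ℕ).Prime := ⟨pp.2⟩
        rw [toLocal_add]
        exact (M pp).add_mem (hx pp) (hy pp)
      zero_mem' := fun pp => by
        haveI : Fact (pp:ℕ).Prime := ⟨pp.2⟩
        show toLocal V (pp:ℕ) 0 ∈ M pp
        rw [show toLocal V (pp:ℕ) 0 = 0 from TensorProduct.tmul_zero _ _]
        exact (M pp).zero_mem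
      smul_mem' := fun n {x} hx pp => by
        haveI : Fact (pp:ℕ).Prime := ⟨pp.2⟩
        rw [toLocal_zsmul]
        exact (M pp).toAddSubgroup.zsmul_mem (hx pp) n } with hΛ'def
  have hmemΛ' : ∀ x : V, x ∈ Λ' ↔ ∀ pp : Nat.Primes,
      (letI : Fact (pp:ℕ).Prime := ⟨pp.2⟩; toLocal V (pp:ℕ) x ∈ M pp) := fun x => Iff.rfl
  -- coordinates of elements of Λ₀ are integers
  have hΛ₀int : ∀ x ∈ Λ₀, ∀ i, ∃ z : ℤ, (z:ℚ) = c.repr x i := by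
    intro x hx i
    rw [hΛ₀, Basis.mem_span_iff_repr_mem] at hx
    obtain ⟨z, hz⟩ := hx i
    exact ⟨z, hz⟩
  -- m • Λ₀ ⊆ Λ'
  have hmΛ₀ : ∀ x ∈ Λ₀, ((m:ℕ):ℤ) • x ∈ Λ' := by
    intro x hx
    rw [hmemΛ']
    intro pp
    haveI : Fact (pp:ℕ).Prime := ⟨pp.2⟩
    refine (hA pp).2 _ (fun i => ?_)
    rw [repr_toLocal]
    obtain ⟨z, hz⟩ := hΛ₀int x hx i
    have hrepr : c.repr (((m:ℕ):ℤ) • x) i = ((m:ℕ):ℚ) * c.repr x i := by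
      rw [map_zsmul, Finsupp.smul_apply]
      push_cast
      rw [zsmul_eq_mul]
      push_cast; ring
    rw [hrepr, ← hz]
    rw [show ((((m:ℕ):ℚ) * (z:ℚ) : ℚ) : ℚ_[(pp:ℕ)]) = (((m * z : ℤ)) : ℚ_[(pp:ℕ)]) by
      push_cast; ring]
    calc ‖((m * z : ℤ) : ℚ_[(pp:ℕ)])‖ = ‖((m:ℤ) : ℚ_[(pp:ℕ)])‖ * ‖((z:ℤ) : ℚ_[(pp:ℕ)])‖ := by
          rw [← Padic.padicNormE.mul]; push_cast; ring_nf
      _ ≤ ((pp:ℕ):ℝ)^(-(a pp :ℤ)) * 1 := by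
          refine mul_le_mul (norm_natCast_le_zpow_of_dvd (pp:ℕ) (hdvd pp))
            (Padic.norm_int_le_one z) (norm_nonneg _) (by positivity)
      _ = ((pp:ℕ):ℝ)^(-(a pp :ℤ)) := mul_one _
  -- coordinates of elements of Λ' have denominators dividing m
  have hΛ'coord : ∀ x ∈ Λ', ∀ i, ∃ z : ℤ, (z:ℚ) = (m:ℚ) * c.repr x i := by
    intro x hx i
    refine exists_int_of_norm_le (fun q hq => ?_)
    haveI := hq
    set pp : Nat.Primes := ⟨q, hq.out⟩ with hpp
    have h1 : toLocal V q x ∈ M pp := (hmemΛ' x).1 hx pp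
    have h2 := (hA pp).1 _ h1 i
    rw [repr_toLocal] at h2
    have h3 : ‖(((m:ℕ):ℤ) : ℚ_[q])‖ ≤ ((q:ℕ):ℝ)^(-(a pp:ℤ)) :=
      norm_natCast_le_zpow_of_dvd q (hdvd pp)
    rw [show (((m:ℚ) * c.repr x i : ℚ) : ℚ_[q]) =
      (((m:ℕ):ℤ) : ℚ_[q]) * ((c.repr x i : ℚ) : ℚ_[q]) by push_cast; ring]
    rw [Padic.padicNormE.mul]
    calc ‖(((m:ℕ):ℤ) : ℚ_[q])‖ * ‖((c.repr x i : ℚ) : ℚ_[q])‖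
        ≤ ((q:ℕ):ℝ)^(-(a pp:ℤ)) * ((q:ℕ):ℝ)^((a pp:ℤ)) :=
          mul_le_mul h3 h2 (norm_nonneg _) (by positivity)
      _ = 1 := by
          rw [← zpow_add₀ (by exact_mod_cast pp.2.pos.ne' : ((q:ℕ):ℝ) ≠ 0)]
          norm_num
  -- Step 4: Λ' is a ℤ-lattice
  have hmQ0 : ((m:ℕ):ℚ) ≠ 0 := by exact_mod_cast hm0
  set c' : Fin (Module.finrank ℚ V) → V := fun i => (((m:ℕ):ℚ))⁻¹ • c i with hc'
  have hΛ'le : Λ' ≤ span ℤ (Set.range c') := by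
    intro x hx
    choose z hz using hΛ'coord x hx
    have hxsum : x = ∑ i, z i • c' i := by
      conv_lhs => rw [← Basis.sum_repr c x]
      refine Finset.sum_congr rfl fun i _ => ?_
      rw [hc']
      rw [show (z i • ((((m:ℕ):ℚ))⁻¹ • c i)) = ((z i : ℚ)) • ((((m:ℕ):ℚ))⁻¹ • c i) from
        (Int.cast_smul_eq_zsmul ℚ _ _).symm, smul_smul, hz i]
      rw [mul_comm ((m:ℕ):ℚ) _, mul_assoc, mul_inv_cancel₀ hmQ0, mul_one]
    rw [hxsum]
    exact Submodule.sum_mem _ fun i _ =>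
      Submodule.smul_mem _ _ (Submodule.subset_span ⟨i, rfl⟩)
  have hfg : Λ'.FG := by
    have h2 : (span ℤ (Set.range c')).FG := Submodule.fg_span (Set.finite_range c')
    haveI := isNoetherian_of_fg_of_noetherian _ h2
    have h3 := IsNoetherian.noetherian (Submodule.comap (span ℤ (Set.range c')).subtype Λ')
    have h4 := h3.map (span ℤ (Set.range c')).subtype
    rwa [Submodule.map_comap_subtype, inf_eq_right.2 hΛ'le] at h4
  haveI : NoZeroSMulDivisors ℤ V := by
    refine ⟨fun {n x} h => ?_⟩
    rw [← Int.cast_smul_eq_zsmul ℚ] at h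
    rcases smul_eq_zero.mp h with h | h
    · left; exact_mod_cast h
    · right; exact h
  haveI : Module.Finite ℤ ↥Λ' := Module.Finite.iff_fg.2 hfg
  haveI : Module.Free ℤ ↥Λ' := Module.free_of_finite_type_torsion_free'
  set β := Module.Free.chooseBasis ℤ ↥Λ' with hβ
  set v : Module.Free.ChooseBasisIndex ℤ ↥Λ' → V := fun k => ((β k : ↥Λ') : V) with hv
  have hspan : span ℤ (Set.range v) = Λ' := by
    have h1 : Set.range v = ⇑Λ'.subtype '' Set.range ⇑β := by
      ext u
      constructor
      · rintro ⟨k, rfl⟩; exact ⟨β k, ⟨k, rfl⟩, rfl⟩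
      · rintro ⟨-, ⟨k, rfl⟩, rfl⟩; exact ⟨k, rfl⟩
    rw [h1, Submodule.span_image, β.span_eq, Submodule.map_subtype_top]
  have hindep : LinearIndependent ℚ v :=
    (LinearIndependent.iff_fractionRing ℤ ℚ).1
      (β.linearIndependent.map' Λ'.subtype (Submodule.ker_subtype _))
  have hspanQ : ⊤ ≤ span ℚ (Set.range v) := by
    have hci : ∀ i, c i ∈ span ℚ (Set.range v) := by
      intro i
      have h1 : ((m:ℕ):ℤ) • c i ∈ Λ' := hmΛ₀ (c i) (hΛ₀ ▸ Submodule.subset_span ⟨i, rfl⟩)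
      have h2 : ((m:ℕ):ℤ) • c i ∈ span ℚ (Set.range v) := by
        rw [← hspan] at h1
        exact Submodule.span_subset_span ℤ ℚ _ h1
      have h3 := Submodule.smul_mem _ ((((m:ℕ):ℚ))⁻¹) h2
      rwa [show ((((m:ℕ):ℚ))⁻¹ • (((m:ℕ):ℤ) • c i)) = c i by
        rw [show (((m:ℕ):ℤ) • c i) = (((m:ℕ):ℚ)) • c i from
          (Int.cast_smul_eq_zsmul ℚ _ _).symm, smul_smul, inv_mul_cancel₀ hmQ0, one_smul]]
        at h3
    calc (⊤ : Submodule ℚ V) = span ℚ (Set.range ⇑c) := c.span_eq.symm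
      _ ≤ span ℚ (Set.range v) := Submodule.span_le.2 (by rintro _ ⟨i, rfl⟩; exact hci i)
  set g : Basis _ ℚ V := Basis.mk hindep hspanQ with hg
  have hcard : Fintype.card (Module.Free.ChooseBasisIndex ℤ ↥Λ') = Module.finrank ℚ V :=
    (Module.finrank_eq_card_basis g).symm
  set g' : Basis (Fin (Module.finrank ℚ V)) ℚ V :=
    g.reindex (Fintype.equivFinOfCardEq hcard) with hg'
  have hrange : Set.range ⇑g' = Set.range v := by
    rw [hg', Basis.range_reindex, hg, Basis.coe_mk]
  have hZlat : IsZLatticeIn V Λ' := ⟨g', by rw [hrange, hspan]⟩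
  -- Step 5: the localizations of Λ' recover M
  refine ⟨Λ', hZlat, ?_⟩
  funext pp
  haveI : Fact (pp:ℕ).Prime := ⟨pp.2⟩
  show localizeLat V (pp:ℕ) Λ' = M pp
  obtain ⟨m', hm'eq, hm'nd⟩ := hm_eq pp
  have hp1 : (1:ℝ) < ((pp:ℕ):ℝ) := by exact_mod_cast pp.2.one_lt
  have hp0 : (((pp:ℕ)):ℝ) ≠ 0 := by positivity
  have hm'norm : ‖((m':ℤ) : ℚ_[(pp:ℕ)])‖ = 1 :=
    norm_int_eq_one_of_not_dvd (pp:ℕ) (by exact_mod_cast hm'nd)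
  have hm'ne : ((m':ℤ) : ℚ_[(pp:ℕ)]) ≠ 0 := by
    intro h0; rw [h0] at hm'norm; simp at hm'norm
  have hppow_ne : (((pp:ℕ):ℚ_[(pp:ℕ)]))^(a pp) ≠ 0 := by
    apply pow_ne_zero
    exact_mod_cast (Nat.cast_ne_zero (R := ℚ_[(pp:ℕ)])).2 pp.2.pos.ne'
  have hmnorm : ‖(((m:ℕ):ℤ) : ℚ_[(pp:ℕ)])‖ = (((pp:ℕ)):ℝ)^(-(a pp:ℤ)) := by
    rw [show (((m:ℕ):ℤ) : ℚ_[(pp:ℕ)]) = ((m':ℤ):ℚ_[(pp:ℕ)]) * (((pp:ℕ):ℚ_[(pp:ℕ)]))^(a pp) by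
      rw [hm'eq]; push_cast; ring]
    rw [Padic.padicNormE.mul, hm'norm, one_mul]
    exact Padic.norm_p_pow (a pp)
  refine le_antisymm ?_ ?_
  · rw [localizeLat_le_iff]
    intro v hv
    exact (hmemΛ' v).1 hv pp
  · intro y hy
    set cp := c.baseChange ℚ_[(pp:ℕ)] with hcp
    have hγ : ∀ i, ‖cp.repr y i‖ ≤ (((pp:ℕ)):ℝ)^((a pp):ℤ) := (hA pp).1 y hy
    -- approximate the coordinates of y by suitable rationals
    have key : ∀ i, ∃ r : ℚ,
        (‖((r:ℚ):ℚ_[(pp:ℕ)]) - cp.repr y i‖ ≤ (((pp:ℕ)):ℝ)^(-(a pp:ℤ))) ∧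
        (∀ qq : Nat.Primes, qq ≠ pp →
          (letI : Fact (qq:ℕ).Prime := ⟨qq.2⟩;
            ‖((r:ℚ):ℚ_[(qq:ℕ)])‖ ≤ (((qq:ℕ)):ℝ)^(-(a qq:ℤ)))) := by
      intro i
      set δ : ℚ_[(pp:ℕ)] := cp.repr y i / ((m':ℤ) : ℚ_[(pp:ℕ)]) with hδ
      have hδnorm : ‖δ‖ ≤ (((pp:ℕ)):ℝ)^((a pp):ℤ) := by
        rw [hδ, norm_div, hm'norm, div_one]
        exact hγ i
      set w : ℚ_[(pp:ℕ)] := δ * (((pp:ℕ):ℚ_[(pp:ℕ)]))^(a pp) with hwdef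
      have hw : ‖w‖ ≤ 1 := by
        rw [hwdef, Padic.padicNormE.mul, Padic.norm_p_pow]
        calc ‖δ‖ * (((pp:ℕ)):ℝ)^(-(a pp:ℤ))
            ≤ (((pp:ℕ)):ℝ)^((a pp):ℤ) * (((pp:ℕ)):ℝ)^(-(a pp:ℤ)) :=
              mul_le_mul_of_nonneg_right hδnorm (by positivity)
          _ = 1 := by rw [← zpow_add₀ hp0]; norm_num
      set wz : ℤ_[(pp:ℕ)] := ⟨w, hw⟩ with hwzdef
      set z : ℕ := PadicInt.appr wz (2 * a pp) with hzdef
      have hzw : ‖(z : ℚ_[(pp:ℕ)]) - w‖ ≤ (((pp:ℕ)):ℝ)^(-(2 * a pp:ℤ)) := by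
        obtain ⟨t, ht⟩ := Ideal.mem_span_singleton'.1
          (PadicInt.appr_spec (2 * a pp) wz)
        have h1 : ‖wz - (z : ℤ_[(pp:ℕ)])‖ ≤ (((pp:ℕ)):ℝ)^(-(2 * a pp:ℤ)) := by
          rw [← ht, norm_mul]
          calc ‖t‖ * ‖((((pp:ℕ)):ℤ_[(pp:ℕ)]))^(2 * a pp)‖
              ≤ 1 * ‖((((pp:ℕ)):ℤ_[(pp:ℕ)]))^(2 * a pp)‖ :=
                mul_le_mul_of_nonneg_right (PadicInt.norm_le_one t) (norm_nonneg _)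
            _ = (((pp:ℕ)):ℝ)^(-(2 * a pp:ℤ)) := by
                rw [one_mul, PadicInt.norm_p_pow]
                norm_num
        rw [show ((z : ℚ_[(pp:ℕ)]) - w) = -((wz - (z : ℤ_[(pp:ℕ)]) : ℤ_[(pp:ℕ)]) : ℚ_[(pp:ℕ)]) by
          rw [hwzdef]; exact (neg_sub w (z:ℚ_[(pp:ℕ)])).symm]
        rw [norm_neg, ← PadicInt.norm_def]
        exact h1
      refine ⟨((m' * z : ℕ) : ℚ) / (((pp:ℕ)):ℚ)^(a pp), ?_, ?_⟩
      · -- closeness at p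
        have hcast : ((((m' * z : ℕ) : ℚ) / (((pp:ℕ)):ℚ)^(a pp) : ℚ) : ℚ_[(pp:ℕ)]) =
            ((m':ℤ) : ℚ_[(pp:ℕ)]) * (z : ℚ_[(pp:ℕ)]) / (((pp:ℕ):ℚ_[(pp:ℕ)]))^(a pp) := by
          push_cast; ring
        have hγeq : cp.repr y i =
            ((m':ℤ) : ℚ_[(pp:ℕ)]) * w / (((pp:ℕ):ℚ_[(pp:ℕ)]))^(a pp) := by
          symm
          rw [hwdef, hδ, ← mul_assoc, mul_div_cancel_right₀ _ hppow_ne, mul_comm,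
            div_mul_cancel₀ _ hm'ne]
        rw [hcast, hγeq]
        rw [show ((m':ℤ) : ℚ_[(pp:ℕ)]) * (z : ℚ_[(pp:ℕ)]) / (((pp:ℕ):ℚ_[(pp:ℕ)]))^(a pp) -
            ((m':ℤ) : ℚ_[(pp:ℕ)]) * w / (((pp:ℕ):ℚ_[(pp:ℕ)]))^(a pp) =
            ((m':ℤ) : ℚ_[(pp:ℕ)]) * ((z : ℚ_[(pp:ℕ)]) - w) / (((pp:ℕ):ℚ_[(pp:ℕ)]))^(a pp) by
          field_simp]
        rw [norm_div, Padic.padicNormE.mul, hm'norm, one_mul, Padic.norm_p_pow]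
        calc ‖(z : ℚ_[(pp:ℕ)]) - w‖ / (((pp:ℕ)):ℝ)^(-(a pp:ℤ))
            ≤ (((pp:ℕ)):ℝ)^(-(2 * a pp:ℤ)) / (((pp:ℕ)):ℝ)^(-(a pp:ℤ)) := by
              have hppos : (0:ℝ) < ((pp:ℕ):ℝ) := by exact_mod_cast pp.2.pos
              have hpos : (0:ℝ) < (((pp:ℕ)):ℝ)^(-(a pp:ℤ)) := zpow_pos hppos _
              exact (div_le_div_iff_of_pos_right hpos).2 hzw
          _ = (((pp:ℕ)):ℝ)^(-(a pp:ℤ)) := by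
              rw [div_eq_mul_inv, ← zpow_neg, ← zpow_add₀ hp0]
              congr 1
              ring
      · -- integrality away from p
        intro qq hqq
        haveI : Fact (qq:ℕ).Prime := ⟨qq.2⟩
        have hne : (qq:ℕ) ≠ (pp:ℕ) := fun h => hqq (Subtype.coe_injective h)
        have hcast : ((((m' * z : ℕ) : ℚ) / (((pp:ℕ)):ℚ)^(a pp) : ℚ) : ℚ_[(qq:ℕ)]) =
            (((m' * z : ℕ):ℤ) : ℚ_[(qq:ℕ)]) / ((((pp:ℕ):ℤ)) : ℚ_[(qq:ℕ)])^(a pp) := by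
          push_cast; ring
        have hden : ‖((((pp:ℕ):ℤ)) : ℚ_[(qq:ℕ)])‖ = 1 := by
          refine norm_int_eq_one_of_not_dvd (qq:ℕ) ?_
          rw [Int.natCast_dvd_natCast]
          intro hdvd'
          exact hne ((Nat.prime_dvd_prime_iff_eq qq.2 pp.2).1 hdvd')
        have hnum : ‖(((m' * z : ℕ):ℤ) : ℚ_[(qq:ℕ)])‖ ≤ (((qq:ℕ)):ℝ)^(-(a qq:ℤ)) := by
          refine norm_natCast_le_zpow_of_dvd (qq:ℕ) ?_
          have h1 : (qq:ℕ)^(a qq) ∣ m := hdvd qq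
          rw [hm'eq] at h1
          have hcop : Nat.Coprime ((qq:ℕ)^(a qq)) (((pp:ℕ))^(a pp)) :=
            Nat.Coprime.pow _ _ ((Nat.coprime_primes qq.2 pp.2).2 hne)
          exact Dvd.dvd.mul_right (hcop.dvd_of_dvd_mul_right h1) z
        rw [hcast, norm_div, norm_pow, hden, one_pow, div_one]
        exact hnum
    choose r hr1 hr2 using key
    set x : V := ∑ i, r i • c i with hx
    have hx_repr : ∀ i, c.repr x i = r i := by
      intro i
      have h := Basis.repr_sum_self c r
      rw [hx]
      exact congrFun h i
    have hxΛ' : x ∈ Λ' := by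
      rw [hmemΛ']
      intro qq
      haveI : Fact (qq:ℕ).Prime := ⟨qq.2⟩
      by_cases hqq : qq = pp
      · subst hqq
        have hdiff : toLocal V (qq:ℕ) x - y ∈ M qq := by
          refine (hA qq).2 _ (fun i => ?_)
          rw [map_sub, Finsupp.sub_apply]
          rw [show ((c.baseChange ℚ_[(qq:ℕ)]).repr (toLocal V (qq:ℕ) x)) i =
            ((r i : ℚ) : ℚ_[(qq:ℕ)]) by rw [repr_toLocal, hx_repr]]
          exact hr1 i
        have := (M qq).add_mem hdiff hy
        rwa [sub_add_cancel] at this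
      · refine (hA qq).2 _ (fun i => ?_)
        rw [show ((c.baseChange ℚ_[(qq:ℕ)]).repr (toLocal V (qq:ℕ) x)) i =
          ((r i : ℚ) : ℚ_[(qq:ℕ)]) by rw [repr_toLocal, hx_repr]]
        exact hr2 i qq hqq
    have h1 : toLocal V (pp:ℕ) x ∈ localizeLat V (pp:ℕ) Λ' :=
      toLocal_mem_localizeLat (pp:ℕ) hxΛ'
    have h2 : toLocal V (pp:ℕ) x - y ∈ localizeLat V (pp:ℕ) Λ' := by
      refine small_mem_localizeLat (pp:ℕ) c hmnorm hm0
        (fun i => hmΛ₀ (c i) (hΛ₀ ▸ Submodule.subset_span ⟨i, rfl⟩)) _ (fun i => ?_)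
      rw [map_sub, Finsupp.sub_apply]
      rw [show ((c.baseChange ℚ_[(pp:ℕ)]).repr (toLocal V (pp:ℕ) x)) i =
        ((r i : ℚ) : ℚ_[(pp:ℕ)]) by rw [repr_toLocal, hx_repr]]
      exact hr1 i
    have h3 := Submodule.sub_mem _ h1 h2
    rwa [sub_sub_cancel] at h3

end LG

end LGAux

/-- Local-global principle for lattices: `Λ ↦ Λ ⊗ Ẑ` is a bijection between
lattices in `V` and lattices in `V ⊗ 𝔸_f` (relative to a fixed integral model
`Λ₀`), and its inverse is intersection with `V`. -/
theorem lattice_localGlobal (Λ₀ : Submodule ℤ V) (hΛ₀ : IsZLatticeIn V Λ₀) :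
    Set.BijOn (adelicOf V) {Λ : Submodule ℤ V | IsZLatticeIn V Λ}
        {M : LocalLatticeFamily V | IsAdelicLattice V Λ₀ M} ∧
      ∀ Λ : Submodule ℤ V, IsZLatticeIn V Λ →
        (Λ : Set V) = globalPart V (adelicOf V Λ) := by
  obtain ⟨c, hc⟩ := hΛ₀
  have part2 : ∀ Λ : Submodule ℤ V, IsZLatticeIn V Λ →
      (Λ : Set V) = globalPart V (adelicOf V Λ) := by
    intro Λ hΛ
    obtain ⟨b, hb⟩ := hΛ
    rw [hb]
    exact LG.span_eq_globalPart b
  refine ⟨⟨?_, ?_, ?_⟩, part2⟩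
  · -- maps to
    intro Λ hΛ
    obtain ⟨b, hb⟩ := hΛ
    constructor
    · intro pp
      haveI : Fact (pp:ℕ).Prime := ⟨pp.2⟩
      show IsZpLattice V (pp:ℕ) (adelicOf V Λ pp)
      refine ⟨b.baseChange ℚ_[(pp:ℕ)], ?_⟩
      rw [LG.adelicOf_apply, hb, LG.localizeLat_span_basis]
    · obtain ⟨N, hN0, hN1, hN2⟩ := LG.exists_scaling_nat b c
      have hsub : {pp : Nat.Primes | adelicOf V Λ pp ≠ adelicOf V Λ₀ pp} ⊆
          {pp : Nat.Primes | (pp:ℕ) ∣ N} := by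
        intro pp hpp
        haveI : Fact (pp:ℕ).Prime := ⟨pp.2⟩
        by_contra hdvd
        refine hpp ?_
        show adelicOf V Λ pp = adelicOf V Λ₀ pp
        rw [LG.adelicOf_apply, LG.adelicOf_apply]
        have hnd : ¬ (((pp:ℕ):ℤ) ∣ ((N:ℕ):ℤ)) := by exact_mod_cast hdvd
        apply le_antisymm
        · exact LG.localizeLat_le_of_smul_mem (pp:ℕ) hb hnd
            (by rintro v ⟨i, rfl⟩; rw [hc]; exact hN1 i)
        · exact LG.localizeLat_le_of_smul_mem (pp:ℕ) hc hnd
            (by rintro v ⟨i, rfl⟩; rw [hb]; exact hN2 i)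
      exact Set.Finite.subset (LG.finite_primes_dvd hN0) hsub
  · -- injective
    intro Λ1 h1 Λ2 h2 heq
    apply SetLike.coe_injective
    rw [part2 Λ1 h1, part2 Λ2 h2, heq]
  · -- surjective
    intro M hMm
    obtain ⟨Λ, hZ, hEq⟩ := LG.exists_global Λ₀ c hc M hMm
    exact ⟨Λ, hZ, hEq⟩
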